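/- For any finite simple graph G with a distinguished vertex s and any edge e not incident to s, the number of acyclic orientations of G with unique sink s equals the number of acyclic orientations of G∖e with unique sink s plus the number of acyclic orientations of G/e with unique sink s. -/

import Mathlib

/-- An orientation of a simple graph `G`, given as a relation `o` on vertices:
only edges of `G` are oriented, and each edge gets exactly one direction. -/
def IsOrientation {V : Type*} (G : SimpleGraph V) (o : V → V → Prop) : Prop :=
  (∀ u v, o u v → G.Adj u v) ∧ ∀ u v, G.Adj u v → (o u v ↔ ¬ o v u)

/-- An orientation is acyclic when it has no directed cycle. -/
def IsAcyclicRel {V : Type*} (o : V → V → Prop) : Prop :=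
  Irreflexive (Relation.TransGen o)

/-- `s` is a sink of the orientation `o`: no outgoing edges. -/
def IsSinkOf {V : Type*} (o : V → V → Prop) (s : V) : Prop := ∀ v, ¬ o s v

/-- The number of acyclic orientations of `G`. -/
noncomputable def aoCount {V : Type*} (G : SimpleGraph V) : ℕ :=
  Nat.card {o : V → V → Prop // IsOrientation G o ∧ IsAcyclicRel o}

/-- The number of acyclic orientations of `G` whose unique sink is `s`. -/
noncomputable def ausoCount {V : Type*} (G : SimpleGraph V) (s : V) : ℕ :=
  Nat.card {o : V → V → Prop // IsOrientation G o ∧ IsAcyclicRel o ∧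
    ∀ v, IsSinkOf o v ↔ v = s}

/-- The contraction `G/e` of the edge `e = (a,b)`: `b` is merged into `a`. -/
def contractEdge {V : Type*} (G : SimpleGraph V) (a b : V) :
    SimpleGraph {v : V // v ≠ b} where
  Adj u v := u ≠ v ∧
    (G.Adj u.val v.val ∨ (u.val = a ∧ G.Adj b v.val) ∨ (v.val = a ∧ G.Adj u.val b))
  symm := by
    refine ⟨?_⟩
    rintro u v ⟨h1, h2⟩
    refine ⟨h1.symm, ?_⟩
    rcases h2 with h | ⟨h, h'⟩ | ⟨h, h'⟩
    · exact Or.inl h.symm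
    · exact Or.inr (Or.inr ⟨h, h'.symm⟩)
    · exact Or.inr (Or.inl ⟨h, h'.symm⟩)
  loopless := by refine ⟨?_⟩; rintro u ⟨h1, _⟩; exact h1 rfl

open Relation

namespace DCaux

variable {V : Type*}

def restr (a b : V) (o : V → V → Prop) : V → V → Prop :=
  fun u v => o u v ∧ ¬((u = a ∧ v = b) ∨ (u = b ∧ v = a))

def addE (o : V → V → Prop) (x y : V) : V → V → Prop :=
  fun u v => o u v ∨ (u = x ∧ v = y)

def contr (a b : V) (o : V → V → Prop) : {v : V // v ≠ b} → {v : V // v ≠ b} → Prop :=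
  fun u v => o u.1 v.1 ∨ (u.1 = a ∧ o b v.1) ∨ (v.1 = a ∧ o u.1 b)

def pr [DecidableEq V] (a : V) {b : V} (hne : a ≠ b) (v : V) : {v : V // v ≠ b} :=
  if h : v = b then ⟨a, hne⟩ else ⟨v, h⟩

def liftR [DecidableEq V] (G : SimpleGraph V) (a : V) {b : V} (hne : a ≠ b)
    (oc : {v : V // v ≠ b} → {v : V // v ≠ b} → Prop) : V → V → Prop :=
  fun u v => (G.deleteEdges {s(a,b)}).Adj u v ∧ oc (pr a hne u) (pr a hne v)

lemma pr_of_ne [DecidableEq V] {a b : V} (hne : a ≠ b) {v : V} (h : v ≠ b) : pr a hne v = ⟨v, h⟩ := by simp [pr, h]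

lemma pr_b [DecidableEq V] {a b : V} (hne : a ≠ b) : pr a hne b = ⟨a, hne⟩ := by simp [pr]

lemma pr_a [DecidableEq V] {a b : V} (hne : a ≠ b) : pr a hne a = ⟨a, hne⟩ := by simp [pr, hne]

lemma acyclic_mono {r p : V → V → Prop} (h : ∀ u v, r u v → p u v)
    (hp : IsAcyclicRel p) : IsAcyclicRel r :=
  fun x hx => hp x (TransGen.mono h _ _ hx)

lemma rtg_antisymm {o : V → V → Prop} (ho : IsAcyclicRel o) {x y : V}
    (h1 : ReflTransGen o x y) (h2 : ReflTransGen o y x) : x = y := by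
  rcases reflTransGen_iff_eq_or_transGen.mp h1 with h | h
  · exact h.symm
  · rcases reflTransGen_iff_eq_or_transGen.mp h2 with h' | h'
    · exact h'
    · exact absurd (h.trans h') (ho x)

lemma addE_decomp {o : V → V → Prop} {a b : V} (hba : ¬ ReflTransGen o b a) {x y : V}
    (h : TransGen (addE o a b) x y) :
    TransGen o x y ∨ (ReflTransGen o x a ∧ ReflTransGen o b y) := by
  induction h with
  | single h =>
    rcases h with h | ⟨rfl, rfl⟩
    · exact Or.inl (TransGen.single h)
    · exact Or.inr ⟨ReflTransGen.refl, ReflTransGen.refl⟩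
  | tail h1 h2 ih =>
    rcases h2 with h2 | ⟨rfl, rfl⟩
    · rcases ih with ih | ⟨iha, ihb⟩
      · exact Or.inl (ih.tail h2)
      · exact Or.inr ⟨iha, ihb.tail h2⟩
    · rcases ih with ih | ⟨iha, ihb⟩
      · exact Or.inr ⟨ih.to_reflTransGen, ReflTransGen.refl⟩
      · exact absurd ihb hba

lemma addE_acyclic {o : V → V → Prop} {a b : V} (ho : IsAcyclicRel o)
    (hba : ¬ ReflTransGen o b a) : IsAcyclicRel (addE o a b) := by
  intro x hx
  rcases addE_decomp hba hx with h | ⟨h1, h2⟩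
  · exact ho x h
  · exact hba (h2.trans h1)

lemma restr_le {a b : V} {o : V → V → Prop} : ∀ u v, restr a b o u v → o u v :=
  fun _ _ h => h.1

end DCaux

namespace DCaux

variable {V : Type*}

/-- reachability in `o` where `a` and `b` are considered merged -/
def reach (o : V → V → Prop) (a b w v : V) : Prop :=
  ReflTransGen o w v ∨ (ReflTransGen o w a ∧ ReflTransGen o b v) ∨
    (ReflTransGen o w b ∧ ReflTransGen o a v)

section ContrAcyclic

variable {o : V → V → Prop} {a b : V}

lemma contr_step (hne : a ≠ b) (ho : IsAcyclicRel o)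
    (hab : ¬ TransGen o a b) (hba : ¬ TransGen o b a)
    {x y : {v : V // v ≠ b}} (hxy : contr a b o x y) :
    (∀ w, reach o a b w x.1 → reach o a b w y.1) ∧ reach o a b y.1 y.1 ∧
      ¬ reach o a b y.1 x.1 := by
  have hrtg_ba : ¬ ReflTransGen o b a := by
    rw [reflTransGen_iff_eq_or_transGen]
    rintro (h | h); exacts [hne h, hba h]
  have hrtg_ab : ¬ ReflTransGen o a b := by
    rw [reflTransGen_iff_eq_or_transGen]
    rintro (h | h); exacts [hne h.symm, hab h]
  refine ⟨?_, Or.inl ReflTransGen.refl, ?_⟩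
  · intro w hw
    rcases hxy with h | ⟨hxa, h⟩ | ⟨hya, h⟩
    · -- o x.1 y.1
      rcases hw with hw | ⟨hw1, hw2⟩ | ⟨hw1, hw2⟩
      · exact Or.inl (hw.tail h)
      · exact Or.inr (Or.inl ⟨hw1, hw2.tail h⟩)
      · exact Or.inr (Or.inr ⟨hw1, hw2.tail h⟩)
    · -- x.1 = a, o b y.1
      rw [hxa] at hw
      rcases hw with hw | ⟨hw1, hw2⟩ | ⟨hw1, hw2⟩
      · exact Or.inr (Or.inl ⟨hw, ReflTransGen.single h⟩)
      · exact absurd hw2 hrtg_ba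
      · exact Or.inl (hw1.tail h)
    · -- y.1 = a, o x.1 b
      rw [hya]
      rcases hw with hw | ⟨hw1, hw2⟩ | ⟨hw1, hw2⟩
      · exact Or.inr (Or.inr ⟨hw.tail h, ReflTransGen.refl⟩)
      · exact absurd (TransGen.tail' hw2 h) (ho b)
      · exact absurd (TransGen.tail' hw2 h) hab
  · rcases hxy with h | ⟨hxa, h⟩ | ⟨hya, h⟩
    · rintro (hw | ⟨hw1, hw2⟩ | ⟨hw1, hw2⟩)
      · exact ho y.1 (TransGen.tail' hw h)
      · exact hrtg_ba ((hw2.tail h).trans hw1)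
      · exact hrtg_ab ((hw2.tail h).trans hw1)
    · rw [hxa]
      rintro (hw | ⟨hw1, hw2⟩ | ⟨hw1, hw2⟩)
      · exact hba (TransGen.head' h hw)
      · exact hrtg_ba hw2
      · exact ho b (TransGen.head' h hw1)
    · rw [hya]
      rintro (hw | ⟨hw1, hw2⟩ | ⟨hw1, hw2⟩)
      · exact hab (TransGen.tail' hw h)
      · exact ho b (TransGen.tail' hw2 h)
      · exact hrtg_ab hw1

lemma contr_acyclic [Finite V] (hne : a ≠ b) (ho : IsAcyclicRel o)
    (hab : ¬ TransGen o a b) (hba : ¬ TransGen o b a) :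
    IsAcyclicRel (contr a b o) := by
  set F : {v : V // v ≠ b} → ℕ := fun x => Set.ncard {w | reach o a b w x.1} with hF
  have hstep : ∀ x y, contr a b o x y → F x < F y := by
    intro x y hxy
    obtain ⟨hsub, hyy, hyx⟩ := contr_step hne ho hab hba hxy
    apply Set.ncard_lt_ncard
    · constructor
      · intro w hw; exact hsub w hw
      · intro hsub'
        exact hyx (hsub' hyy)
    · exact Set.toFinite _
  have key : ∀ x y, TransGen (contr a b o) x y → F x < F y := by
    intro x y h
    induction h with
    | single h => exact hstep _ _ h
    | tail h1 h2 ih => exact ih.trans (hstep _ _ h2)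
  intro x hx
  exact lt_irrefl _ (key x x hx)

end ContrAcyclic

end DCaux

namespace DCaux

variable {V : Type*} [DecidableEq V] {G : SimpleGraph V} {a b : V} {o : V → V → Prop}

lemma orient_asymm (ho : IsOrientation G o) {u v : V} (h1 : o u v) (h2 : o v u) : False :=
  (ho.2 u v (ho.1 u v h1)).mp h1 h2

lemma orient_total (ho : IsOrientation G o) {u v : V} (h : G.Adj u v) : o u v ∨ o v u := by
  by_cases h1 : o v u
  · exact Or.inr h1
  · exact Or.inl ((ho.2 u v h).mpr h1)

lemma orient_irrefl (ho : IsOrientation G o) (u : V) : ¬ o u u :=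
  fun h => (ho.1 u u h).ne rfl

lemma del_adj {u v : V} : (G.deleteEdges {s(a,b)}).Adj u v ↔
    G.Adj u v ∧ ¬((u = a ∧ v = b) ∨ (u = b ∧ v = a)) := by
  rw [SimpleGraph.deleteEdges_adj, Set.mem_singleton_iff, Sym2.eq_iff]

/-- an orientation of `G ∖ e` never orients `a b` or `b a` -/
lemma del_orient_ab {o' : V → V → Prop} (ho' : IsOrientation (G.deleteEdges {s(a,b)}) o') :
    ¬ o' a b ∧ ¬ o' b a := by
  constructor <;> intro h <;> have := ho'.1 _ _ h <;> rw [del_adj] at this <;> tauto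

lemma restr_orientation (ho : IsOrientation G o) :
    IsOrientation (G.deleteEdges {s(a,b)}) (restr a b o) := by
  constructor
  · intro u v h
    rw [del_adj]
    exact ⟨ho.1 u v h.1, h.2⟩
  · intro u v h
    rw [del_adj] at h
    have hsym : ¬((v = a ∧ u = b) ∨ (v = b ∧ u = a)) := by tauto
    constructor
    · rintro ⟨h1, _⟩ ⟨h2, _⟩
      exact orient_asymm ho h1 h2
    · intro hn
      refine ⟨?_, h.2⟩
      rcases orient_total ho h.1 with h1 | h1
      · exact h1
      · exact absurd ⟨h1, hsym⟩ hn

lemma addE_orientation {o' : V → V → Prop} (ho' : IsOrientation (G.deleteEdges {s(a,b)}) o')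
    {x y : V} (hxy : (x = a ∧ y = b) ∨ (x = b ∧ y = a)) (hG : G.Adj a b) :
    IsOrientation G (addE o' x y) := by
  have hGxy : G.Adj x y := by rcases hxy with ⟨rfl, rfl⟩ | ⟨rfl, rfl⟩; exacts [hG, hG.symm]
  have hne : x ≠ y := hGxy.ne
  have hyx : ¬ o' y x := by
    rcases hxy with ⟨rfl, rfl⟩ | ⟨rfl, rfl⟩; exacts [(del_orient_ab ho').2, (del_orient_ab ho').1]
  have hxy' : ¬ o' x y := by
    rcases hxy with ⟨rfl, rfl⟩ | ⟨rfl, rfl⟩; exacts [(del_orient_ab ho').1, (del_orient_ab ho').2]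
  constructor
  · rintro u v (h | ⟨rfl, rfl⟩)
    · exact ((del_adj).mp (ho'.1 u v h)).1
    · exact hGxy
  · intro u v hadj
    by_cases hp : (u = a ∧ v = b) ∨ (u = b ∧ v = a)
    · -- {u,v} = {a,b} : exactly the new edge or its reverse
      have huv : (u = x ∧ v = y) ∨ (u = y ∧ v = x) := by
        rcases hxy with ⟨rfl, rfl⟩ | ⟨rfl, rfl⟩ <;> tauto
      rcases huv with ⟨rfl, rfl⟩ | ⟨rfl, rfl⟩
      · constructor
        · rintro - (h | ⟨h1, -⟩)
          · exact hyx h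
          · exact hne h1.symm
        · intro _; exact Or.inr ⟨rfl, rfl⟩
      · constructor
        · rintro (h | ⟨h1, -⟩)
          · exact absurd h hyx
          · exact absurd h1.symm hne
        · intro hn
          exact absurd (Or.inr ⟨rfl, rfl⟩) hn
    · have hD : (G.deleteEdges {s(a,b)}).Adj u v := del_adj.mpr ⟨hadj, hp⟩
      have hux : ¬(u = x ∧ v = y) := by
        rintro ⟨rfl, rfl⟩
        rcases hxy with ⟨rfl, rfl⟩ | ⟨rfl, rfl⟩ <;> tauto
      have hvx : ¬(v = x ∧ u = y) := by
        rintro ⟨rfl, rfl⟩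
        rcases hxy with ⟨rfl, rfl⟩ | ⟨rfl, rfl⟩ <;> tauto
      constructor
      · intro h1 h2
        rcases h1 with h | hp1
        · rcases h2 with h' | hp2
          · exact orient_asymm ho' h h'
          · exact hvx hp2
        · exact hux hp1
      · intro hn
        rcases orient_total ho' hD with h | h
        · exact Or.inl h
        · exact absurd (Or.inl h) hn

lemma restr_addE {o' : V → V → Prop} (ho' : IsOrientation (G.deleteEdges {s(a,b)}) o')
    {x y : V} (hxy : (x = a ∧ y = b) ∨ (x = b ∧ y = a)) :
    restr a b (addE o' x y) = o' := by
  funext u v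
  apply propext
  constructor
  · rintro ⟨h | ⟨rfl, rfl⟩, hp⟩
    · exact h
    · exact absurd (by tauto) hp
  · intro h
    refine ⟨Or.inl h, ?_⟩
    have := (del_adj).mp (ho'.1 u v h)
    exact this.2

end DCaux

namespace DCaux

variable {V : Type*} [DecidableEq V] {G : SimpleGraph V} {a b : V}

lemma contractEdge_adj {u v : {v : V // v ≠ b}} : (contractEdge G a b).Adj u v ↔
    u ≠ v ∧ (G.Adj u.val v.val ∨ (u.val = a ∧ G.Adj b v.val) ∨ (v.val = a ∧ G.Adj u.val b)) :=
  Iff.rfl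

lemma contr_orientation (hne : a ≠ b) {o' : V → V → Prop}
    (ho' : IsOrientation (G.deleteEdges {s(a,b)}) o')
    (hnab : ¬ Relation.TransGen o' a b) (hnba : ¬ Relation.TransGen o' b a) :
    IsOrientation (contractEdge G a b) (contr a b o') := by
  have hab' := del_orient_ab ho'
  have asym : ∀ u v : {v : V // v ≠ b}, u ≠ v →
      contr a b o' u v → contr a b o' v u → False := by
    rintro u v huv (h | ⟨hu, h⟩ | ⟨hv, h⟩) (h' | ⟨hv', h'⟩ | ⟨hu', h'⟩)
    · exact orient_asymm ho' h h'
    · refine hnba ?_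
      have : Relation.TransGen o' b v.1 := TransGen.head' h' (ReflTransGen.single h)
      rwa [hv'] at this
    · refine hnab ?_
      have : Relation.TransGen o' u.1 b := TransGen.head' h (ReflTransGen.single h')
      rwa [hu'] at this
    · refine hnba ?_
      have : Relation.TransGen o' b u.1 := TransGen.head' h (ReflTransGen.single h')
      rwa [hu] at this
    · exact huv (Subtype.ext (hu.trans hv'.symm))
    · exact orient_asymm ho' h h'
    · refine hnab ?_
      have : Relation.TransGen o' v.1 b := TransGen.head' h' (ReflTransGen.single h)
      rwa [hv] at this
    · exact orient_asymm ho' h h'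
    · exact huv (Subtype.ext (hu'.trans hv.symm))
  constructor
  · intro u v h
    rw [contractEdge_adj]
    have hne_uv : u ≠ v := by
      rintro rfl
      rcases h with h | ⟨hu, h⟩ | ⟨hv, h⟩
      · exact orient_irrefl ho' u.1 h
      · rw [hu] at h; exact hab'.2 h
      · rw [hv] at h; exact hab'.1 h
    refine ⟨hne_uv, ?_⟩
    rcases h with h | ⟨hu, h⟩ | ⟨hv, h⟩
    · exact Or.inl (del_adj.mp (ho'.1 _ _ h)).1
    · exact Or.inr (Or.inl ⟨hu, (del_adj.mp (ho'.1 _ _ h)).1⟩)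
    · exact Or.inr (Or.inr ⟨hv, (del_adj.mp (ho'.1 _ _ h)).1⟩)
  · intro u v hadj
    rw [contractEdge_adj] at hadj
    obtain ⟨hnuv, hdisj⟩ := hadj
    constructor
    · exact fun h h' => asym u v hnuv h h'
    · intro hn
      rcases hdisj with hG | ⟨hu, hG⟩ | ⟨hv, hG⟩
      · have hD : (G.deleteEdges {s(a,b)}).Adj u.1 v.1 := by
          rw [del_adj]
          refine ⟨hG, ?_⟩
          rintro (⟨-, h1⟩ | ⟨h1, -⟩)
          exacts [v.2 h1, u.2 h1]
        rcases orient_total ho' hD with h | h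
        · exact Or.inl h
        · exact absurd (Or.inl h) hn
      · have hD : (G.deleteEdges {s(a,b)}).Adj b v.1 := by
          rw [del_adj]
          refine ⟨hG, ?_⟩
          rintro (⟨h1, -⟩ | ⟨-, h1⟩)
          · exact hne h1.symm
          · exact hnuv (Subtype.ext (hu.trans h1.symm))
        rcases orient_total ho' hD with h | h
        · exact Or.inr (Or.inl ⟨hu, h⟩)
        · exact absurd (Or.inr (Or.inr ⟨hu, h⟩)) hn
      · have hD : (G.deleteEdges {s(a,b)}).Adj u.1 b := by
          rw [del_adj]
          refine ⟨hG, ?_⟩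
          rintro (⟨h1, -⟩ | ⟨h1, -⟩)
          · exact hnuv (Subtype.ext (h1.trans hv.symm))
          · exact u.2 h1
        rcases orient_total ho' hD with h | h
        · exact Or.inr (Or.inr ⟨hv, h⟩)
        · exact absurd (Or.inr (Or.inl ⟨hv, h⟩)) hn

lemma adj_pr (hne : a ≠ b) {u v : V} (hD : (G.deleteEdges {s(a,b)}).Adj u v) :
    (contractEdge G a b).Adj (pr a hne u) (pr a hne v) := by
  have hGne := (del_adj.mp hD).1.ne
  obtain ⟨hG, hp⟩ := del_adj.mp hD
  rw [contractEdge_adj]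
  by_cases hub : u = b <;> by_cases hvb : v = b
  · exact absurd (hub.trans hvb.symm) hGne
  · subst hub
    rw [pr_b, pr_of_ne hne hvb]
    have hva : v ≠ a := by rintro rfl; exact hp (Or.inr ⟨rfl, rfl⟩)
    exact ⟨fun h => hva (congrArg Subtype.val h).symm, Or.inr (Or.inl ⟨rfl, hG⟩)⟩
  · subst hvb
    rw [pr_of_ne hne hub, pr_b]
    have hua : u ≠ a := by rintro rfl; exact hp (Or.inl ⟨rfl, rfl⟩)
    exact ⟨fun h => hua (congrArg Subtype.val h), Or.inr (Or.inr ⟨rfl, hG⟩)⟩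
  · rw [pr_of_ne hne hub, pr_of_ne hne hvb]
    exact ⟨fun h => hGne (congrArg Subtype.val h), Or.inl hG⟩

lemma liftR_orientation (hne : a ≠ b) {oc} (hoc : IsOrientation (contractEdge G a b) oc) :
    IsOrientation (G.deleteEdges {s(a,b)}) (liftR G a hne oc) := by
  constructor
  · exact fun u v h => h.1
  · intro u v h
    constructor
    · rintro ⟨hD, h1⟩ ⟨hD', h2⟩
      exact orient_asymm hoc h1 h2
    · intro hn
      refine ⟨h, ?_⟩
      rcases orient_total hoc (adj_pr hne h) with h1 | h1
      · exact h1
      · exact absurd ⟨h.symm, h1⟩ hn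

lemma liftR_acyclic (hne : a ≠ b) {oc} (hoc : IsAcyclicRel oc) :
    IsAcyclicRel (liftR G a hne oc) :=
  fun u h => hoc _ (h.lift (pr a hne) (fun _ _ hh => hh.2))

lemma liftR_no_ab (hne : a ≠ b) {oc} (hoc : IsAcyclicRel oc) :
    ¬ Relation.TransGen (liftR G a hne oc) a b := by
  intro h
  have := h.lift (pr a hne) (fun _ _ hh => hh.2)
  rw [Function.onFun, pr_a, pr_b] at this
  exact hoc _ this

lemma liftR_no_ba (hne : a ≠ b) {oc} (hoc : IsAcyclicRel oc) :
    ¬ Relation.TransGen (liftR G a hne oc) b a := by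
  intro h
  have := h.lift (pr a hne) (fun _ _ hh => hh.2)
  rw [Function.onFun, pr_a, pr_b] at this
  exact hoc _ this

lemma contr_liftR (hne : a ≠ b) {oc} (hoc : IsOrientation (contractEdge G a b) oc) :
    contr a b (liftR G a hne oc) = oc := by
  funext u v
  rcases u with ⟨u, hub⟩
  rcases v with ⟨v, hvb⟩
  apply propext
  constructor
  · rintro (⟨hD, h⟩ | ⟨hu, hD, h⟩ | ⟨hv, hD, h⟩)
    · rwa [pr_of_ne hne hub, pr_of_ne hne hvb] at h
    · rw [pr_b, pr_of_ne hne hvb] at h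
      simp only at hu
      subst hu
      exact h
    · rw [pr_of_ne hne hub, pr_b] at h
      simp only at hv
      subst hv
      exact h
  · intro h
    have hadj := hoc.1 _ _ h
    rw [contractEdge_adj] at hadj
    obtain ⟨hneuv, hdisj⟩ := hadj
    rcases hdisj with hG | ⟨hu, hG⟩ | ⟨hv, hG⟩
    · refine Or.inl ⟨del_adj.mpr ⟨hG, ?_⟩, ?_⟩
      · rintro (⟨-, h1⟩ | ⟨h1, -⟩)
        exacts [hvb h1, hub h1]
      · rwa [pr_of_ne hne hub, pr_of_ne hne hvb]
    · simp only at hu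
      refine Or.inr (Or.inl ⟨hu, del_adj.mpr ⟨hG, ?_⟩, ?_⟩)
      · rintro (⟨h1, -⟩ | ⟨-, h1⟩)
        · exact hne h1.symm
        · exact hneuv (Subtype.ext (hu.trans h1.symm))
      · rw [pr_b, pr_of_ne hne hvb]
        subst hu
        exact h
    · simp only at hv
      refine Or.inr (Or.inr ⟨hv, del_adj.mpr ⟨hG, ?_⟩, ?_⟩)
      · rintro (⟨h1, -⟩ | ⟨h1, -⟩)
        · exact hneuv (Subtype.ext (h1.trans hv.symm))
        · exact hub h1
      · rw [pr_of_ne hne hub, pr_b]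
        subst hv
        exact h

lemma liftR_contr (hne : a ≠ b) {o' : V → V → Prop}
    (ho' : IsOrientation (G.deleteEdges {s(a,b)}) o')
    (hnab : ¬ Relation.TransGen o' a b) (hnba : ¬ Relation.TransGen o' b a) :
    liftR G a hne (contr a b o') = o' := by
  have hab' := del_orient_ab ho'
  funext u v
  apply propext
  constructor
  · rintro ⟨hD, hoc⟩
    have hGne := (del_adj.mp hD).1.ne
    have hp := (del_adj.mp hD).2
    by_cases hub : u = b <;> by_cases hvb : v = b
    · exact absurd (hub.trans hvb.symm) hGne
    · subst hub
      rw [pr_b, pr_of_ne hne hvb] at hoc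
      rcases hoc with h | ⟨-, h⟩ | ⟨hva, h⟩
      · -- h : o' a v ; want o' b v
        rcases orient_total ho' hD with h1 | h1
        · exact h1
        · exact absurd (TransGen.head' h (ReflTransGen.single h1)) hnab
      · exact h
      · exact absurd h hab'.1
    · subst hvb
      rw [pr_of_ne hne hub, pr_b] at hoc
      rcases hoc with h | ⟨hua, h⟩ | ⟨-, h⟩
      · -- h : o' u a ; want o' u b
        rcases orient_total ho' hD with h1 | h1
        · exact h1
        · exact absurd (TransGen.head' h1 (ReflTransGen.single h)) hnba
      · exact absurd h hab'.2
      · exact h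
    · rw [pr_of_ne hne hub, pr_of_ne hne hvb] at hoc
      rcases hoc with h | ⟨hua, h⟩ | ⟨hva, h⟩
      · exact h
      · -- hua : u = a, h : o' b v ; want o' u v
        subst hua
        rcases orient_total ho' hD with h1 | h1
        · exact h1
        · exact absurd (TransGen.head' h (ReflTransGen.single h1)) hnba
      · subst hva
        rcases orient_total ho' hD with h1 | h1
        · exact h1
        · exact absurd (TransGen.head' h1 (ReflTransGen.single h)) hnab
  · intro h
    have hD := ho'.1 _ _ h
    refine ⟨hD, ?_⟩
    have hGne := (del_adj.mp hD).1.ne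
    by_cases hub : u = b <;> by_cases hvb : v = b
    · exact absurd (hub.trans hvb.symm) hGne
    · subst hub
      rw [pr_b, pr_of_ne hne hvb]
      exact Or.inr (Or.inl ⟨rfl, h⟩)
    · subst hvb
      rw [pr_of_ne hne hub, pr_b]
      exact Or.inr (Or.inr ⟨rfl, h⟩)
    · rw [pr_of_ne hne hub, pr_of_ne hne hvb]
      exact Or.inl h

lemma eq_of_restr_eq {o1 o2 : V → V → Prop} (h1 : IsOrientation G o1)
    (h2 : IsOrientation G o2) (hG : G.Adj a b)
    (hr : restr a b o1 = restr a b o2) (hdir : o1 a b ↔ o2 a b) : o1 = o2 := by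
  funext u v
  apply propext
  by_cases hp : (u = a ∧ v = b) ∨ (u = b ∧ v = a)
  · rcases hp with ⟨ha, hb⟩ | ⟨ha, hb⟩
    · rw [ha, hb]; exact hdir
    · rw [ha, hb]
      have e1 := h1.2 a b hG
      have e2 := h2.2 a b hG
      tauto
  · have := congrFun (congrFun hr u) v
    have h3 : (o1 u v ∧ ¬((u = a ∧ v = b) ∨ (u = b ∧ v = a))) ↔
        (o2 u v ∧ ¬((u = a ∧ v = b) ∨ (u = b ∧ v = a))) := iff_of_eq this
    tauto

end DCaux

namespace DCaux

variable {V : Type*} [DecidableEq V] {G : SimpleGraph V} {s a b : V}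

abbrev AUSO (G : SimpleGraph V) (s : V) (o : V → V → Prop) : Prop :=
  IsOrientation G o ∧ IsAcyclicRel o ∧ ∀ v, IsSinkOf o v ↔ v = s

/-- the splitting condition: `o` goes to the contraction side -/
def cond (a b : V) (o : V → V → Prop) : Prop :=
  (o b a ∨ IsSinkOf (restr a b o) a) ∧
    ¬ Relation.TransGen (restr a b o) a b ∧ ¬ Relation.TransGen (restr a b o) b a

lemma sink_no_tg {r : V → V → Prop} {x y : V} (h : IsSinkOf r x) :
    ¬ Relation.TransGen r x y := by
  intro htg
  induction htg with
  | single h1 => exact h _ h1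
  | tail h1 h2 ih => exact ih

lemma exists_out {o : V → V → Prop} (ho : AUSO G s o) {v : V} (hv : v ≠ s) :
    ∃ w, o v w := by
  by_contra hno
  push_neg at hno
  exact hv ((ho.2.2 v).mp hno)

lemma restr_mem (hab : G.Adj a b) (hsa : s ≠ a) (hsb : s ≠ b) {o : V → V → Prop}
    (ho : AUSO G s o) (hnC : ¬ cond a b o) :
    AUSO (G.deleteEdges {s(a,b)}) s (restr a b o) := by
  have hne : a ≠ b := hab.ne
  refine ⟨restr_orientation ho.1, acyclic_mono restr_le ho.2.1, ?_⟩
  have hssink : IsSinkOf o s := (ho.2.2 s).mpr rfl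
  have hout : ∀ v, v ≠ s → ∃ w, restr a b o v w := by
    intro v hv
    by_cases hva : v = a
    · subst hva
      rcases orient_total ho.1 hab with h | h
      · -- o a b : if a were a sink of restr, cond would hold
        by_contra hno
        push_neg at hno
        refine hnC ⟨Or.inr (fun w hw => hno w hw), fun htg => sink_no_tg hno htg, ?_⟩
        intro htg
        exact ho.2.1 b ((TransGen.mono restr_le _ _ htg).tail h)
      · -- o b a : a has an o-out distinct from b
        obtain ⟨w, hw⟩ := exists_out ho (fun hh => hsa hh.symm)
        have hwb : w ≠ b := by rintro rfl; exact orient_asymm ho.1 hw h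
        refine ⟨w, hw, ?_⟩
        rintro (⟨-, h1⟩ | ⟨h1, -⟩)
        exacts [hwb h1, hne h1]
    · by_cases hvb : v = b
      · subst hvb
        rcases orient_total ho.1 hab with h | h
        · -- o a b : b has an o-out distinct from a
          obtain ⟨w, hw⟩ := exists_out ho (fun hh => hsb hh.symm)
          have hwa : w ≠ a := by rintro rfl; exact orient_asymm ho.1 h hw
          refine ⟨w, hw, ?_⟩
          rintro (⟨h1, -⟩ | ⟨-, h1⟩)
          exacts [hne h1.symm, hwa h1]
        · -- o b a : if b were a sink of restr, cond would hold
          by_contra hno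
          push_neg at hno
          refine hnC ⟨Or.inl h, ?_, fun htg => sink_no_tg (fun w hw => hno w hw) htg⟩
          intro htg
          exact ho.2.1 a ((TransGen.mono restr_le _ _ htg).tail h)
      · obtain ⟨w, hw⟩ := exists_out ho hv
        refine ⟨w, hw, ?_⟩
        rintro (⟨h1, -⟩ | ⟨h1, -⟩)
        exacts [hva h1, hvb h1]
  intro v
  constructor
  · intro hvsink
    by_contra hvs
    obtain ⟨w, hw⟩ := hout v hvs
    exact hvsink w hw
  · rintro rfl
    exact fun w hw => hssink w hw.1

lemma contr_mem [Finite V] (hab : G.Adj a b) (hsa : s ≠ a) (hsb : s ≠ b)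
    {o : V → V → Prop} (ho : AUSO G s o) (hC : cond a b o) :
    AUSO (contractEdge G a b) ⟨s, hsb⟩ (contr a b (restr a b o)) := by
  have hne : a ≠ b := hab.ne
  have ho' : IsOrientation (G.deleteEdges {s(a,b)}) (restr a b o) := restr_orientation ho.1
  have hnab := hC.2.1
  have hnba := hC.2.2
  have hacy' : IsAcyclicRel (restr a b o) := acyclic_mono restr_le ho.2.1
  refine ⟨contr_orientation hne ho' hnab hnba, contr_acyclic hne hacy' hnab hnba, ?_⟩
  have hssink : IsSinkOf o s := (ho.2.2 s).mpr rfl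
  have hsink_s : IsSinkOf (contr a b (restr a b o)) ⟨s, hsb⟩ := by
    rintro w (h | ⟨h1, h⟩ | ⟨h1, h⟩)
    · exact hssink _ h.1
    · exact hsa h1
    · exact hssink _ h.1
  have hout : ∀ w : {v : V // v ≠ b}, w ≠ ⟨s, hsb⟩ → ∃ z, contr a b (restr a b o) w z := by
    intro w hws
    have hws' : w.1 ≠ s := fun h => hws (Subtype.ext h)
    by_cases hwa : w.1 = a
    · rcases orient_total ho.1 hab with h | h
      · -- o a b : use an out-edge of b
        obtain ⟨z, hz⟩ := exists_out ho (fun hh => hsb hh.symm)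
        have hza : z ≠ a := by rintro rfl; exact orient_asymm ho.1 h hz
        have hzb : z ≠ b := fun hh => orient_irrefl ho.1 b (hh ▸ hz)
        refine ⟨⟨z, hzb⟩, Or.inr (Or.inl ⟨hwa, hz, ?_⟩)⟩
        rintro (⟨h1, -⟩ | ⟨-, h1⟩)
        exacts [hne h1.symm, hza h1]
      · -- o b a : use an out-edge of a
        obtain ⟨z, hz⟩ := exists_out ho (fun hh => hsa hh.symm)
        have hzb : z ≠ b := by rintro rfl; exact orient_asymm ho.1 hz h
        refine ⟨⟨z, hzb⟩, Or.inl ?_⟩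
        rw [hwa]
        refine ⟨hz, ?_⟩
        rintro (⟨-, h1⟩ | ⟨h1, -⟩)
        exacts [hzb h1, hne h1]
    · obtain ⟨z, hz⟩ := exists_out ho hws'
      by_cases hzb : z = b
      · subst hzb
        refine ⟨⟨a, hne⟩, Or.inr (Or.inr ⟨rfl, hz, ?_⟩)⟩
        rintro (⟨h1, -⟩ | ⟨h1, -⟩)
        exacts [hwa h1, w.2 h1]
      · refine ⟨⟨z, hzb⟩, Or.inl ⟨hz, ?_⟩⟩
        rintro (⟨h1, -⟩ | ⟨h1, -⟩)
        exacts [hwa h1, w.2 h1]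
  intro v
  constructor
  · intro hv
    by_contra hvs
    obtain ⟨z, hz⟩ := hout v hvs
    exact hv z hz
  · rintro rfl
    exact hsink_s

lemma addE_mem (hab : G.Adj a b) (hsa : s ≠ a) (hsb : s ≠ b) {o' : V → V → Prop}
    (ho' : AUSO (G.deleteEdges {s(a,b)}) s o') {x y : V}
    (hxy : (x = a ∧ y = b) ∨ (x = b ∧ y = a))
    (hacy : IsAcyclicRel (addE o' x y)) : AUSO G s (addE o' x y) := by
  refine ⟨addE_orientation ho'.1 hxy hab, hacy, ?_⟩
  have hssink : IsSinkOf o' s := (ho'.2.2 s).mpr rfl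
  have hsx : s ≠ x := by rcases hxy with ⟨rfl, -⟩ | ⟨rfl, -⟩; exacts [hsa, hsb]
  intro v
  constructor
  · intro hv
    by_contra hvs
    by_cases hvx : v = x
    · exact hv y (Or.inr ⟨hvx, rfl⟩)
    · obtain ⟨w, hw⟩ := exists_out ho' hvs
      exact hv w (Or.inl hw)
  · rintro rfl w (hw | ⟨h1, -⟩)
    exacts [hssink w hw, hsx h1]

end DCaux

namespace DCaux

open Classical in
noncomputable def Phi {V : Type*} [Fintype V] [DecidableEq V] (G : SimpleGraph V)
    (s a b : V) (hab : G.Adj a b) (hsa : s ≠ a) (hsb : s ≠ b) :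
    {o : V → V → Prop // IsOrientation G o ∧ IsAcyclicRel o ∧ ∀ v, IsSinkOf o v ↔ v = s} →
    {o : V → V → Prop // IsOrientation (G.deleteEdges {s(a,b)}) o ∧ IsAcyclicRel o ∧
        ∀ v, IsSinkOf o v ↔ v = s} ⊕
    {o : {v : V // v ≠ b} → {v : V // v ≠ b} → Prop // IsOrientation (contractEdge G a b) o ∧
        IsAcyclicRel o ∧ ∀ v, IsSinkOf o v ↔ v = ⟨s, hsb⟩} :=
  fun o =>
    if hC : cond a b o.1 then
      Sum.inr ⟨contr a b (restr a b o.1), contr_mem hab hsa hsb o.2 hC⟩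
    else
      Sum.inl ⟨restr a b o.1, restr_mem hab hsa hsb o.2 hC⟩

variable {V : Type*} [Fintype V] [DecidableEq V] {G : SimpleGraph V} {s a b : V}

lemma phi_inj (hab : G.Adj a b) (hsa : s ≠ a) (hsb : s ≠ b) :
    Function.Injective (Phi G s a b hab hsa hsb) := by
  classical
  have hne : a ≠ b := hab.ne
  rintro ⟨o1, h1⟩ ⟨o2, h2⟩ h
  simp only [Phi] at h
  by_cases hC1 : cond a b o1 <;> by_cases hC2 : cond a b o2
  · rw [dif_pos hC1, dif_pos hC2] at h
    have hcc : contr a b (restr a b o1) = contr a b (restr a b o2) :=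
      congrArg Subtype.val (Sum.inr.inj h)
    have hr1 : restr a b o1 = restr a b o2 := by
      have e1 := liftR_contr hne (restr_orientation h1.1) hC1.2.1 hC1.2.2
      have e2 := liftR_contr hne (restr_orientation h2.1) hC2.2.1 hC2.2.2
      rw [← e1, ← e2, hcc]
    have key : ∀ (p q : V → V → Prop), AUSO G s p → AUSO G s q → cond a b p →
        restr a b p = restr a b q → p a b → q a b := by
      intro p q hp hq hCp hrpq hpab
      by_contra hqab
      have hqba : q b a := (orient_total hq.1 hab).resolve_left hqab
      have hpnba : ¬ p b a := (hp.1.2 a b hab).mp hpab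
      have hsk : IsSinkOf (restr a b p) a := hCp.1.resolve_left hpnba
      have hsk2 : IsSinkOf q a := by
        intro w hw
        by_cases hwb : w = b
        · rw [hwb] at hw
          exact (hq.1.2 a b hab).mp hw hqba
        · refine hsk w ?_
          rw [hrpq]
          refine ⟨hw, ?_⟩
          rintro (⟨-, hh⟩ | ⟨hh, -⟩)
          exacts [hwb hh, hne hh]
      exact hsa ((hq.2.2 a).mp hsk2).symm
    have hdir : o1 a b ↔ o2 a b :=
      ⟨key o1 o2 h1 h2 hC1 hr1, key o2 o1 h2 h1 hC2 hr1.symm⟩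
    exact Subtype.ext (eq_of_restr_eq h1.1 h2.1 hab hr1 hdir)
  · rw [dif_pos hC1, dif_neg hC2] at h
    exact absurd h (by simp)
  · rw [dif_neg hC1, dif_pos hC2] at h
    exact absurd h (by simp)
  · rw [dif_neg hC1, dif_neg hC2] at h
    have hr1 : restr a b o1 = restr a b o2 :=
      congrArg Subtype.val (Sum.inl.inj h)
    have key : ∀ (p q : V → V → Prop), AUSO G s p → AUSO G s q → ¬ cond a b q →
        restr a b p = restr a b q → p a b → q a b := by
      intro p q hp hq hCq hrpq hpab
      by_contra hqab
      have hqba : q b a := (orient_total hq.1 hab).resolve_left hqab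
      refine hCq ⟨Or.inl hqba, ?_, ?_⟩
      · intro htg
        exact hq.2.1 a ((TransGen.mono restr_le _ _ htg).tail hqba)
      · intro htg
        rw [← hrpq] at htg
        exact hp.2.1 b ((TransGen.mono restr_le _ _ htg).tail hpab)
    have hdir : o1 a b ↔ o2 a b :=
      ⟨key o1 o2 h1 h2 hC2 hr1, key o2 o1 h2 h1 hC1 hr1.symm⟩
    exact Subtype.ext (eq_of_restr_eq h1.1 h2.1 hab hr1 hdir)

end DCaux

namespace DCaux

section Surj

variable {V : Type*} [Fintype V] [DecidableEq V] {G : SimpleGraph V} {s a b : V}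

lemma oc_out_to_lift (hne : a ≠ b) {oc} (hoc : IsOrientation (contractEdge G a b) oc)
    {w : V} (hwb : w ≠ b) (hwa : w ≠ a) {z : {v : V // v ≠ b}} (h : oc ⟨w, hwb⟩ z) :
    ∃ z', liftR G a hne oc w z' := by
  have hadj := hoc.1 _ _ h
  rw [contractEdge_adj] at hadj
  obtain ⟨hzne, hdisj⟩ := hadj
  rcases hdisj with hG | ⟨h1, -⟩ | ⟨h1, hG⟩
  · refine ⟨z.1, del_adj.mpr ⟨hG, ?_⟩, ?_⟩
    · rintro (⟨hh, -⟩ | ⟨hh, -⟩)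
      exacts [hwa hh, hwb hh]
    · rw [pr_of_ne hne hwb, pr_of_ne hne z.2]
      exact h
  · exact absurd h1 hwa
  · refine ⟨b, del_adj.mpr ⟨hG, ?_⟩, ?_⟩
    · rintro (⟨hh, -⟩ | ⟨hh, -⟩)
      exacts [hwa hh, hwb hh]
    · rw [pr_of_ne hne hwb, pr_b]
      have hz : z = ⟨a, hne⟩ := Subtype.ext h1
      rwa [hz] at h

lemma merged_out (hne : a ≠ b) {oc} (hoc : IsOrientation (contractEdge G a b) oc)
    (hnA : ¬ ∃ w, liftR G a hne oc a w) {z : {v : V // v ≠ b}} (h : oc ⟨a, hne⟩ z) :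
    ∃ z', liftR G a hne oc b z' := by
  have hadj := hoc.1 _ _ h
  rw [contractEdge_adj] at hadj
  obtain ⟨hzne, hdisj⟩ := hadj
  rcases hdisj with hG | ⟨-, hG⟩ | ⟨h1, -⟩
  · exfalso
    apply hnA
    refine ⟨z.1, del_adj.mpr ⟨hG, ?_⟩, ?_⟩
    · rintro (⟨-, hh⟩ | ⟨hh, -⟩)
      exacts [z.2 hh, hne hh]
    · rw [pr_a, pr_of_ne hne z.2]
      exact h
  · refine ⟨z.1, del_adj.mpr ⟨hG, ?_⟩, ?_⟩
    · rintro (⟨hh, -⟩ | ⟨-, hh⟩)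
      · exact hne hh.symm
      · exact hzne (Subtype.ext hh.symm)
    · rw [pr_b, pr_of_ne hne z.2]
      exact h
  · exact absurd (Subtype.ext h1.symm) hzne

lemma phi_surj (hab : G.Adj a b) (hsa : s ≠ a) (hsb : s ≠ b) :
    Function.Surjective (Phi G s a b hab hsa hsb) := by
  classical
  have hne : a ≠ b := hab.ne
  rintro (⟨o', ho'⟩ | ⟨oc, hoc⟩)
  · -- deleted-graph side
    have hdel := del_orient_ab ho'.1
    by_cases hba : ReflTransGen o' b a
    · have hnab : ¬ ReflTransGen o' a b := fun h => hne (rtg_antisymm ho'.2.1 h hba)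
      have hacy : IsAcyclicRel (addE o' b a) := addE_acyclic ho'.2.1 hnab
      have hoA : AUSO G s (addE o' b a) :=
        addE_mem hab hsa hsb ho' (Or.inr ⟨rfl, rfl⟩) hacy
      refine ⟨⟨addE o' b a, hoA⟩, ?_⟩
      have hre : restr a b (addE o' b a) = o' := restr_addE ho'.1 (Or.inr ⟨rfl, rfl⟩)
      have hnC : ¬ cond a b (addE o' b a) := by
        intro hC
        apply hC.2.2
        rw [hre]
        rcases reflTransGen_iff_eq_or_transGen.mp hba with h | h
        · exact absurd h hne
        · exact h
      simp only [Phi]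
      rw [dif_neg hnC]
      exact congrArg Sum.inl (Subtype.ext hre)
    · have hacy : IsAcyclicRel (addE o' a b) := addE_acyclic ho'.2.1 hba
      have hoA : AUSO G s (addE o' a b) :=
        addE_mem hab hsa hsb ho' (Or.inl ⟨rfl, rfl⟩) hacy
      refine ⟨⟨addE o' a b, hoA⟩, ?_⟩
      have hre : restr a b (addE o' a b) = o' := restr_addE ho'.1 (Or.inl ⟨rfl, rfl⟩)
      have hnC : ¬ cond a b (addE o' a b) := by
        rintro ⟨h1, -, -⟩
        rcases h1 with h1 | h1
        · rcases h1 with h1 | ⟨h1, -⟩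
          · exact hdel.2 h1
          · exact hne h1.symm
        · rw [hre] at h1
          exact hsa ((ho'.2.2 a).mp h1).symm
      simp only [Phi]
      rw [dif_neg hnC]
      exact congrArg Sum.inl (Subtype.ext hre)
  · -- contracted side
    have ho'or := liftR_orientation hne hoc.1
    have ho'acy := liftR_acyclic (G := G) hne hoc.2.1
    have hnab := liftR_no_ab (G := G) hne hoc.2.1
    have hnba := liftR_no_ba (G := G) hne hoc.2.1
    have hnab' : ¬ ReflTransGen (liftR G a hne oc) a b := by
      rw [reflTransGen_iff_eq_or_transGen]
      rintro (h | h)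
      exacts [hne h.symm, hnab h]
    have hnba' : ¬ ReflTransGen (liftR G a hne oc) b a := by
      rw [reflTransGen_iff_eq_or_transGen]
      rintro (h | h)
      exacts [hne h, hnba h]
    have hocsink : IsSinkOf oc ⟨s, hsb⟩ := (hoc.2.2 _).mpr rfl
    have hs_sink : IsSinkOf (liftR G a hne oc) s := by
      intro w hw
      have h2 := hw.2
      rw [pr_of_ne hne hsb] at h2
      exact hocsink _ h2
    have hout_other : ∀ v, v ≠ s → v ≠ a → v ≠ b → ∃ w, liftR G a hne oc v w := by
      intro v hvs hva hvb
      have hvs' : (⟨v, hvb⟩ : {x : V // x ≠ b}) ≠ ⟨s, hsb⟩ :=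
        fun h => hvs (congrArg Subtype.val h)
      have hz : ∃ z, oc ⟨v, hvb⟩ z := by
        by_contra hno
        push_neg at hno
        exact hvs' ((hoc.2.2 _).mp hno)
      obtain ⟨z, hz⟩ := hz
      exact oc_out_to_lift hne hoc.1 hvb hva hz
    have hmerged : ∃ z, oc ⟨a, hne⟩ z := by
      by_contra hno
      push_neg at hno
      exact hsa (congrArg Subtype.val ((hoc.2.2 _).mp hno)).symm
    by_cases hA : ∃ w, liftR G a hne oc a w
    · -- orient e as b → a
      have hacy : IsAcyclicRel (addE (liftR G a hne oc) b a) := addE_acyclic ho'acy hnab'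
      have hoA : AUSO G s (addE (liftR G a hne oc) b a) := by
        refine ⟨addE_orientation ho'or (Or.inr ⟨rfl, rfl⟩) hab, hacy, ?_⟩
        intro v
        constructor
        · intro hv
          by_contra hvs
          by_cases hvb : v = b
          · exact hv a (Or.inr ⟨hvb, rfl⟩)
          · by_cases hva : v = a
            · subst hva
              obtain ⟨w, hw⟩ := hA
              exact hv w (Or.inl hw)
            · obtain ⟨w, hw⟩ := hout_other v hvs hva hvb
              exact hv w (Or.inl hw)
        · rintro rfl w (hw | ⟨h1, -⟩)
          exacts [hs_sink w hw, hsb h1]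
      refine ⟨⟨_, hoA⟩, ?_⟩
      have hre : restr a b (addE (liftR G a hne oc) b a) = liftR G a hne oc :=
        restr_addE ho'or (Or.inr ⟨rfl, rfl⟩)
      have hC : cond a b (addE (liftR G a hne oc) b a) := by
        refine ⟨Or.inl (Or.inr ⟨rfl, rfl⟩), ?_, ?_⟩
        · rw [hre]; exact hnab
        · rw [hre]; exact hnba
      simp only [Phi]
      rw [dif_pos hC]
      refine congrArg Sum.inr (Subtype.ext ?_)
      show contr a b (restr a b _) = oc
      rw [hre]
      exact contr_liftR hne hoc.1
    · -- orient e as a → b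
      have hacy : IsAcyclicRel (addE (liftR G a hne oc) a b) := addE_acyclic ho'acy hnba'
      have hoA : AUSO G s (addE (liftR G a hne oc) a b) := by
        refine ⟨addE_orientation ho'or (Or.inl ⟨rfl, rfl⟩) hab, hacy, ?_⟩
        intro v
        constructor
        · intro hv
          by_contra hvs
          by_cases hva : v = a
          · exact hv b (Or.inr ⟨hva, rfl⟩)
          · by_cases hvb : v = b
            · subst hvb
              obtain ⟨z, hz⟩ := hmerged
              obtain ⟨w, hw⟩ := merged_out hne hoc.1 hA hz
              exact hv w (Or.inl hw)
            · obtain ⟨w, hw⟩ := hout_other v hvs hva hvb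
              exact hv w (Or.inl hw)
        · rintro rfl w (hw | ⟨h1, -⟩)
          exacts [hs_sink w hw, hsa h1]
      refine ⟨⟨_, hoA⟩, ?_⟩
      have hre : restr a b (addE (liftR G a hne oc) a b) = liftR G a hne oc :=
        restr_addE ho'or (Or.inl ⟨rfl, rfl⟩)
      have hC : cond a b (addE (liftR G a hne oc) a b) := by
        refine ⟨Or.inr ?_, ?_, ?_⟩
        · rw [hre]
          intro w hw
          exact hA ⟨w, hw⟩
        · rw [hre]; exact hnab
        · rw [hre]; exact hnba
      simp only [Phi]
      rw [dif_pos hC]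
      refine congrArg Sum.inr (Subtype.ext ?_)
      show contr a b (restr a b _) = oc
      rw [hre]
      exact contr_liftR hne hoc.1

end Surj

end DCaux


theorem auso_deletion_contraction {V : Type*} [Fintype V] [DecidableEq V]
    (G : SimpleGraph V) (s a b : V) (hab : G.Adj a b) (hsa : s ≠ a) (hsb : s ≠ b) :
    ausoCount G s =
      ausoCount (G.deleteEdges {s(a, b)}) s + ausoCount (contractEdge G a b) ⟨s, hsb⟩ := by
  classical
  simp only [ausoCount]
  rw [← Nat.card_sum]
  exact Nat.card_eq_of_bijective (DCaux.Phi G s a b hab hsa hsb)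
    ⟨DCaux.phi_inj hab hsa hsb, DCaux.phi_surj hab hsa hsb⟩
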